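/- Let X ∈ ℝ^{n×d}, let x be a random vector in ℝ^d with E[x x^T] = Σ, and let α ≥ 0, β > 0, γ > 0. Then E ‖ (γI + α 1 1^T + β XX^T/d)^{−1} (β X x/d) ‖² ≤ (‖Σ‖_op/d) · Σ_j λ_j(XX^T/d + (α/β) 1 1^T) / [ γ/β + λ_j(XX^T/d + (α/β) 1 1^T) ]². -/

import Mathlib

set_option synthInstance.maxHeartbeats 1000000
set_option maxHeartbeats 2000000

open MeasureTheory Matrix Finset RealInnerProductSpace

/-- Eigenvalues of a real symmetric matrix listed in decreasing order
(junk value `0` if the matrix is not symmetric). -/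
noncomputable def descEig {n : ℕ} (A : Matrix (Fin n) (Fin n) ℝ) : Fin n → ℝ :=
  if hA : A.IsHermitian then
    fun j => (hA.eigenvalues ∘ Tuple.sort hA.eigenvalues) j.rev
  else 0

/-- Operator (spectral) norm of a real matrix. -/
noncomputable def opNorm {m n : ℕ} (A : Matrix (Fin m) (Fin n) ℝ) : ℝ :=
  ‖LinearMap.toContinuousLinearMap (Matrix.toEuclideanLin A)‖

lemma quad_le {d : ℕ} (S : Matrix (Fin d) (Fin d) ℝ) (v : Fin d → ℝ) :
    v ⬝ᵥ S.mulVec v ≤ opNorm S * ∑ j, v j ^ 2 := by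
  set w : EuclideanSpace ℝ (Fin d) := (WithLp.equiv 2 _).symm v with hw
  have hnorm : ‖w‖ ^ 2 = ∑ j, v j ^ 2 := by
    rw [EuclideanSpace.norm_eq, Real.sq_sqrt (by positivity)]
    simp [hw, sq_abs]
  have h1 : v ⬝ᵥ S.mulVec v = ⟪w, Matrix.toEuclideanLin S w⟫ := by
    rw [PiLp.inner_apply]
    simp [dotProduct, Matrix.toEuclideanLin_apply, hw, mul_comm]
  have h2 : ⟪w, Matrix.toEuclideanLin S w⟫ ≤ ‖w‖ * ‖Matrix.toEuclideanLin S w‖ :=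
    real_inner_le_norm _ _
  have h3 : ‖Matrix.toEuclideanLin S w‖ ≤ opNorm S * ‖w‖ := by
    have := (LinearMap.toContinuousLinearMap (Matrix.toEuclideanLin S)).le_opNorm w
    simpa [opNorm] using this
  calc v ⬝ᵥ S.mulVec v ≤ ‖w‖ * (opNorm S * ‖w‖) := by
        rw [h1]; exact h2.trans (by nlinarith [norm_nonneg w])
    _ = opNorm S * ‖w‖ ^ 2 := by ring
    _ = opNorm S * ∑ j, v j ^ 2 := by rw [hnorm]

lemma trace_nonneg_of_psd {n : ℕ} {A : Matrix (Fin n) (Fin n) ℝ} (hA : A.PosSemidef) :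
    0 ≤ A.trace := by
  rw [Matrix.trace]
  refine Finset.sum_nonneg fun i _ => ?_
  have := hA.dotProduct_mulVec_nonneg (Pi.single i 1)
  simpa [dotProduct, Matrix.mulVec, Pi.single_apply] using this

lemma psd_smul {n : ℕ} {A : Matrix (Fin n) (Fin n) ℝ} (hA : A.PosSemidef) {c : ℝ}
    (hc : 0 ≤ c) : (c • A).PosSemidef := by
  refine Matrix.PosSemidef.of_dotProduct_mulVec_nonneg ?_ fun x => ?_
  · have h1 := hA.1
    rw [Matrix.IsHermitian] at h1 ⊢
    rw [conjTranspose_smul, h1]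
    simp
  · rw [smul_mulVec, dotProduct_smul, smul_eq_mul]
    exact mul_nonneg hc (hA.dotProduct_mulVec_nonneg x)

lemma descEig_sum {n : ℕ} (A : Matrix (Fin n) (Fin n) ℝ) (hA : A.IsHermitian) (f : ℝ → ℝ) :
    ∑ j, f (descEig A j) = ∑ j, f (hA.eigenvalues j) := by
  simp only [descEig, dif_pos hA]
  rw [← Equiv.sum_comp (Fin.revPerm.trans (Tuple.sort hA.eigenvalues))
    (fun j => f (hA.eigenvalues j))]
  rfl

lemma spec_stuff {n : ℕ} (A : Matrix (Fin n) (Fin n) ℝ) (hA : A.IsHermitian) (c : ℝ)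
    (hc : ∀ j, 0 < c + hA.eigenvalues j) :
    IsUnit (c • (1 : Matrix (Fin n) (Fin n) ℝ) + A).det ∧
    ((c • (1 : Matrix (Fin n) (Fin n) ℝ) + A)⁻¹ * A *
        (c • (1 : Matrix (Fin n) (Fin n) ℝ) + A)⁻¹).trace =
      ∑ j, hA.eigenvalues j / (c + hA.eigenvalues j) ^ 2 := by
  set U : Matrix (Fin n) (Fin n) ℝ := (hA.eigenvectorUnitary : Matrix (Fin n) (Fin n) ℝ) with hU
  have hUU : star U * U = 1 := (Unitary.mem_iff.mp hA.eigenvectorUnitary.2).1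
  have hUU' : U * star U = 1 := (Unitary.mem_iff.mp hA.eigenvectorUnitary.2).2
  set lam := hA.eigenvalues with hlam
  have hspec : A = U * diagonal lam * star U := by
    have := hA.spectral_theorem
    simpa using this
  set D : Matrix (Fin n) (Fin n) ℝ := diagonal lam with hD
  set E : Matrix (Fin n) (Fin n) ℝ := diagonal (fun j => (c + lam j)⁻¹) with hE
  set N : Matrix (Fin n) (Fin n) ℝ := c • 1 + A with hN
  have hNdecomp : N = U * diagonal (fun j => c + lam j) * star U := by
    have : diagonal (fun j => c + lam j) = c • 1 + D := by
      rw [hD]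
      ext i j
      rcases eq_or_ne i j with h | h <;>
        simp [h, diagonal_apply_ne, Matrix.one_apply]
    rw [hN, hspec, this]
    rw [Matrix.mul_add, Matrix.add_mul, Matrix.mul_smul, Matrix.smul_mul, Matrix.mul_one, hUU']
  have hright : N * (U * E * star U) = 1 := by
    rw [hNdecomp]
    calc U * diagonal (fun j => c + lam j) * star U * (U * E * star U)
        = U * (diagonal (fun j => c + lam j) * (star U * U) * E) * star U := by
          noncomm_ring
      _ = U * (diagonal (fun j => c + lam j) * E) * star U := by rw [hUU]; noncomm_ring
      _ = U * 1 * star U := by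
          rw [hE, diagonal_mul_diagonal]
          have : (fun i => (c + lam i) * (c + lam i)⁻¹) = fun _ => (1 : ℝ) :=
            funext fun j => mul_inv_cancel₀ (hc j).ne'
          rw [this, diagonal_one]
      _ = 1 := by rw [Matrix.mul_one, hUU']
  have hdet : IsUnit N.det := Matrix.isUnit_det_of_right_inverse hright
  refine ⟨hdet, ?_⟩
  have hNinv : N⁻¹ = U * E * star U := Matrix.inv_eq_right_inv hright
  have hprod : N⁻¹ * A * N⁻¹ = U * (E * D * E) * star U := by
    rw [hNinv, hspec]
    calc U * E * star U * (U * D * star U) * (U * E * star U)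
        = U * (E * (star U * U) * D * (star U * U) * E) * star U := by noncomm_ring
      _ = U * (E * D * E) * star U := by rw [hUU]; noncomm_ring
  rw [hprod, Matrix.trace_mul_cycle, ← Matrix.mul_assoc, hUU, Matrix.one_mul]
  rw [hE, hD, diagonal_mul_diagonal, diagonal_mul_diagonal, trace_diagonal]
  refine Finset.sum_congr rfl fun j _ => ?_
  have h := (hc j).ne'
  field_simp

lemma integral_quad {n d : ℕ} (B : Matrix (Fin n) (Fin d) ℝ)
    (μ : Measure (Fin d → ℝ)) [IsProbabilityMeasure μ]
    (S : Matrix (Fin d) (Fin d) ℝ)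
    (hint : ∀ i j, Integrable (fun x : Fin d → ℝ => x i * x j) μ)
    (hcov : ∀ i j, (∫ x, x i * x j ∂μ) = S i j) :
    (∫ x, (∑ i : Fin n, (B.mulVec x i) ^ 2) ∂μ) = (B * S * Bᵀ).trace := by
  have hexp : ∀ x : Fin d → ℝ, (∑ i : Fin n, (B.mulVec x i) ^ 2) =
      ∑ i : Fin n, ∑ j : Fin d, ∑ k : Fin d, B i j * B i k * (x j * x k) := by
    intro x
    refine Finset.sum_congr rfl fun i _ => ?_
    rw [Matrix.mulVec, dotProduct, sq, Finset.sum_mul_sum]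
    refine Finset.sum_congr rfl fun j _ => Finset.sum_congr rfl fun k _ => by ring
  simp only [hexp]
  rw [integral_finset_sum _ (fun i _ => ?_)]
  · have : ∀ i : Fin n, (∫ x, ∑ j : Fin d, ∑ k : Fin d, B i j * B i k * (x j * x k) ∂μ)
        = ∑ j : Fin d, ∑ k : Fin d, B i j * B i k * S j k := by
      intro i
      rw [integral_finset_sum _ (fun j _ =>
        integrable_finset_sum _ (fun k _ => (hint j k).const_mul _))]
      refine Finset.sum_congr rfl fun j _ => ?_
      rw [integral_finset_sum _ (fun k _ => (hint j k).const_mul _)]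
      refine Finset.sum_congr rfl fun k _ => ?_
      rw [MeasureTheory.integral_const_mul, hcov]
    simp only [this]
    rw [Matrix.trace]
    refine Finset.sum_congr rfl fun i _ => ?_
    rw [Matrix.diag, Matrix.mul_apply]
    simp only [Matrix.mul_apply, Matrix.transpose_apply, Finset.sum_mul]
    rw [Finset.sum_comm]
    refine Finset.sum_congr rfl fun j _ => Finset.sum_congr rfl fun k _ => by ring
  · exact integrable_finset_sum _ (fun j _ =>
      integrable_finset_sum _ (fun k _ => (hint j k).const_mul _))

lemma row_quad {n d : ℕ} (B : Matrix (Fin n) (Fin d) ℝ) (S : Matrix (Fin d) (Fin d) ℝ)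
    (i : Fin n) :
    (B * S * Bᵀ) i i = (fun j => B i j) ⬝ᵥ S.mulVec (fun j => B i j) := by
  simp only [Matrix.mul_apply, Matrix.transpose_apply, dotProduct, Matrix.mulVec,
    Finset.sum_mul, Finset.mul_sum]
  rw [Finset.sum_comm]
  refine Finset.sum_congr rfl fun j _ => Finset.sum_congr rfl fun k _ => by ring

/-- for `X ∈ ℝ^{n×d}`, a random vector `x` with `E[xxᵀ] = Σ`,
and `α ≥ 0`, `β > 0`, `γ > 0`,
`E ‖(γI + α11ᵀ + βXXᵀ/d)⁻¹ (βXx/d)‖² ≤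
  (‖Σ‖_op/d) Σ_j λ_j(XXᵀ/d + (α/β)11ᵀ) / [γ/β + λ_j(XXᵀ/d + (α/β)11ᵀ)]²`. -/
theorem stmt_12 (n d : ℕ) (hd : 0 < d) (X : Matrix (Fin n) (Fin d) ℝ)
    (μ : Measure (Fin d → ℝ)) [IsProbabilityMeasure μ]
    (S : Matrix (Fin d) (Fin d) ℝ)
    (hint : ∀ i j, Integrable (fun x : Fin d → ℝ => x i * x j) μ)
    (hcov : ∀ i j, (∫ x, x i * x j ∂μ) = S i j)
    (α β γ : ℝ) (hα : 0 ≤ α) (hβ : 0 < β) (hγ : 0 < γ) :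
    (∫ x, (∑ i : Fin n,
        ((γ • (1 : Matrix (Fin n) (Fin n) ℝ) + α • (Matrix.of fun _ _ => (1 : ℝ)) +
          (β / d) • (X * Xᵀ))⁻¹).mulVec ((β / d) • X.mulVec x) i ^ 2) ∂μ)
      ≤ (opNorm S / d) *
        ∑ j : Fin n,
          descEig ((d : ℝ)⁻¹ • (X * Xᵀ) + (α / β) • (Matrix.of fun _ _ => (1 : ℝ))) j /
            (γ / β +
              descEig ((d : ℝ)⁻¹ • (X * Xᵀ) + (α / β) • (Matrix.of fun _ _ => (1 : ℝ))) j) ^ 2 := by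
  have hd' : (0 : ℝ) < (d : ℝ) := by exact_mod_cast hd
  set J : Matrix (Fin n) (Fin n) ℝ := Matrix.of fun _ _ => (1 : ℝ) with hJ
  set A : Matrix (Fin n) (Fin n) ℝ := (d : ℝ)⁻¹ • (X * Xᵀ) + (α / β) • J with hAdef
  set c : ℝ := γ / β with hcdef
  -- PSD facts
  have hJpsd : J.PosSemidef := by
    refine Matrix.PosSemidef.of_dotProduct_mulVec_nonneg ?_ fun x => ?_
    · ext i j
      simp [hJ, Matrix.conjTranspose_apply]
    · have : star x ⬝ᵥ J.mulVec x = (∑ i, x i) * (∑ i, x i) := by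
        simp [hJ, dotProduct, Matrix.mulVec, Finset.sum_mul]
      rw [this]
      exact mul_self_nonneg _
  have hXpsd : (X * Xᵀ).PosSemidef := by
    have := Matrix.posSemidef_self_mul_conjTranspose X
    rwa [Matrix.conjTranspose_eq_transpose_of_trivial] at this
  have hApsd : A.PosSemidef := by
    exact (psd_smul hXpsd (by positivity)).add
      (psd_smul hJpsd (by positivity))
  have hA : A.IsHermitian := hApsd.1
  have hc : ∀ j, 0 < c + hA.eigenvalues j := fun j =>
    add_pos_of_pos_of_nonneg (div_pos hγ hβ) (hApsd.eigenvalues_nonneg j)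
  obtain ⟨hdetN, htr⟩ := spec_stuff A hA c hc
  set N : Matrix (Fin n) (Fin n) ℝ := c • 1 + A with hNdef
  set M : Matrix (Fin n) (Fin n) ℝ :=
    γ • (1 : Matrix (Fin n) (Fin n) ℝ) + α • J + (β / d) • (X * Xᵀ) with hMdef
  have hMN : M = β • N := by
    rw [hMdef, hNdef, hAdef, smul_add, smul_add, smul_smul, smul_smul, smul_smul]
    rw [mul_div_cancel₀ _ hβ.ne', mul_div_cancel₀ _ hβ.ne']
    rw [show β * (d : ℝ)⁻¹ = β / d by rw [div_eq_mul_inv]]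
    abel
  haveI : Invertible β := invertibleOfNonzero hβ.ne'
  have hMinv : M⁻¹ = β⁻¹ • N⁻¹ := by
    rw [hMN, Matrix.inv_smul (k := β) (h := hdetN), invOf_eq_inv]
  set B : Matrix (Fin n) (Fin d) ℝ := M⁻¹ * ((β / d) • X) with hBdef
  have hBeq : B = (d : ℝ)⁻¹ • (N⁻¹ * X) := by
    rw [hBdef, hMinv, Matrix.smul_mul, Matrix.mul_smul, smul_smul]
    congr 1
    field_simp
  have hBx : ∀ x : Fin d → ℝ, M⁻¹.mulVec ((β / d) • X.mulVec x) = B.mulVec x := by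
    intro x
    rw [hBdef, ← Matrix.mulVec_mulVec, Matrix.smul_mulVec]
  have hLHS : (∫ x, (∑ i : Fin n, M⁻¹.mulVec ((β / d) • X.mulVec x) i ^ 2) ∂μ)
      = (B * S * Bᵀ).trace := by
    have : (fun x : Fin d → ℝ => ∑ i : Fin n, M⁻¹.mulVec ((β / d) • X.mulVec x) i ^ 2)
        = fun x => ∑ i : Fin n, (B.mulVec x i) ^ 2 := by
      funext x
      simp only [hBx x]
    rw [this, integral_quad B μ S hint hcov]
  -- symmetry of N⁻¹
  have hNherm : N.IsHermitian := by
    have h1 : (c • (1 : Matrix (Fin n) (Fin n) ℝ)).IsHermitian := by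
      rw [Matrix.IsHermitian, Matrix.conjTranspose_smul, Matrix.conjTranspose_one]
      simp
    exact h1.add hA
  have hNsym : Nᵀ = N := by
    have := hNherm
    rwa [Matrix.IsHermitian, Matrix.conjTranspose_eq_transpose_of_trivial] at this
  have hNt : (N⁻¹)ᵀ = N⁻¹ := by
    rw [Matrix.transpose_nonsing_inv, hNsym]
  -- step 2
  have hstep2 : (B * S * Bᵀ).trace ≤ opNorm S * (B * Bᵀ).trace := by
    rw [Matrix.trace, Matrix.trace, Finset.mul_sum]
    refine Finset.sum_le_sum fun i _ => ?_
    have h1 := quad_le S (fun j => B i j)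
    have h2 : (B * Bᵀ).diag i = ∑ j, B i j ^ 2 := by
      simp [Matrix.diag, Matrix.mul_apply, sq]
    rw [Matrix.diag, row_quad B S i]
    rw [h2]
    exact h1
  -- step 3
  have hBBt : (B * Bᵀ).trace = (d:ℝ)⁻¹ * (N⁻¹ * ((d:ℝ)⁻¹ • (X * Xᵀ)) * N⁻¹).trace := by
    have e1 : B * Bᵀ = ((d:ℝ)⁻¹ * (d:ℝ)⁻¹) • (N⁻¹ * (X * Xᵀ) * N⁻¹) := by
      rw [hBeq, Matrix.transpose_smul, Matrix.transpose_mul, hNt]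
      rw [Matrix.smul_mul, Matrix.mul_smul, smul_smul]
      congr 1
      simp [Matrix.mul_assoc]
    have e2 : N⁻¹ * ((d:ℝ)⁻¹ • (X * Xᵀ)) * N⁻¹ = (d:ℝ)⁻¹ • (N⁻¹ * (X * Xᵀ) * N⁻¹) := by
      rw [Matrix.mul_smul, Matrix.smul_mul]
    rw [e1, e2, Matrix.trace_smul, Matrix.trace_smul, smul_eq_mul, smul_eq_mul]
    ring
  -- step 4
  have hstep4 : (N⁻¹ * ((d:ℝ)⁻¹ • (X * Xᵀ)) * N⁻¹).trace ≤ (N⁻¹ * A * N⁻¹).trace := by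
    have hdiff : N⁻¹ * A * N⁻¹ =
        N⁻¹ * ((d:ℝ)⁻¹ • (X * Xᵀ)) * N⁻¹ + N⁻¹ * ((α / β) • J) * N⁻¹ := by
      rw [hAdef]
      noncomm_ring
    have hpsd : (N⁻¹ * ((α / β) • J) * N⁻¹).PosSemidef := by
      have h := (psd_smul hJpsd (c := α / β) (by positivity)).mul_mul_conjTranspose_same (N⁻¹)
      rwa [Matrix.conjTranspose_eq_transpose_of_trivial, hNt] at h
    rw [hdiff, Matrix.trace_add]
    linarith [trace_nonneg_of_psd hpsd]
  -- assemble
  have hsum : (∑ j, descEig A j / (c + descEig A j) ^ 2)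
      = ∑ j, hA.eigenvalues j / (c + hA.eigenvalues j) ^ 2 :=
    descEig_sum A hA (fun t => t / (c + t) ^ 2)
  have h0 : (0:ℝ) ≤ opNorm S := norm_nonneg _
  have hdi : (0:ℝ) ≤ (d:ℝ)⁻¹ := inv_nonneg.mpr hd'.le
  calc (∫ x, (∑ i : Fin n, M⁻¹.mulVec ((β / d) • X.mulVec x) i ^ 2) ∂μ)
      = (B * S * Bᵀ).trace := hLHS
    _ ≤ opNorm S * (B * Bᵀ).trace := hstep2
    _ = opNorm S * ((d:ℝ)⁻¹ * (N⁻¹ * ((d:ℝ)⁻¹ • (X * Xᵀ)) * N⁻¹).trace) := by rw [hBBt]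
    _ ≤ opNorm S * ((d:ℝ)⁻¹ * (N⁻¹ * A * N⁻¹).trace) := by
        apply mul_le_mul_of_nonneg_left _ h0
        exact mul_le_mul_of_nonneg_left hstep4 hdi
    _ = (opNorm S / d) * ∑ j, hA.eigenvalues j / (c + hA.eigenvalues j) ^ 2 := by
        rw [htr, div_eq_mul_inv]
        ring
    _ = (opNorm S / d) * ∑ j, descEig A j / (c + descEig A j) ^ 2 := by rw [hsum]
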